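/- arXiv:2112.07810 — 3 statements merged into one kernel-verified Lean document; each statement's English description precedes it below -/
import Mathlib

section
/- Let T be a rooted binary phylogenetic X-tree with positive edge lengths, let e₁ and e₂ be the two edges incident with the root, of lengths ℓ₁ and ℓ₂, and let T₁ and T₂ be the maximal pendant subtrees below e₁ and e₂ respectively. Define φ_T(k) = min{ PD_T(W) : W ⊆ X, |W| = k } for 1 ≤ k ≤ |X|, with φ_T(0) = 0 and φ_T(k) = 0 when T is a single vertex. Then for all k ∈ {1,…,|X|}: φ_T(k) = min over pairs (k₁,k₂) of non-negative integers with k₁ + k₂ = k of [ φ_{T₁}(k₁) + φ_{T₂}(k₂) + ℓ₁·𝟙_{k₁>0} + ℓ₂·𝟙_{k₂>0} ], where 𝟙_{k_j>0} equals 1 if k_j > 0 and 0 otherwise. -/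
/-!
Rooted phylogenetic `X`-trees with positive edge lengths.

A tree on a finite vertex type `V` is encoded by its parent function: the root
has no parent, every other vertex has one, and iterating the parent function
reaches the root.  The edge into a non-root vertex `v` has length `len v`, and
`hgt v` is the distance from the root to `v`.  Leaves are the vertices with no
children; the taxon set `X` of the paper is the set `leaves` of leaves.
Every non-leaf, non-root vertex has out-degree (number of children) at least 2.
-/

noncomputable section

attribute [local instance] Classical.propDecidable

structure PhyloTree (V : Type) [Fintype V] [DecidableEq V] where
  root : V
  parent : V → Option V
  len : V → ℝ
  hgt : V → ℝ
  parent_root : parent root = none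
  parent_isSome : ∀ v, v ≠ root → (parent v).isSome
  reaches_root : ∀ v, Relation.ReflTransGen (fun a b => parent a = some b) v root
  hgt_root : hgt root = 0
  hgt_eq : ∀ v u, parent v = some u → hgt v = hgt u + len v
  len_pos : ∀ v, v ≠ root → 0 < len v
  outdeg_ge_two : ∀ v, v ≠ root → (∃ u, parent u = some v) →
    2 ≤ Set.ncard {u | parent u = some v}

namespace PhyloTree

variable {V : Type} [Fintype V] [DecidableEq V]

/-- `T.step a b` : `b` is the parent of `a`. -/
def step (T : PhyloTree V) (a b : V) : Prop := T.parent a = some b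

/-- `T.anc u v` : `u` is an ancestor of `v`, i.e. `u` lies on the (unique) path
from the root to `v` (reflexively). -/
def anc (T : PhyloTree V) (u v : V) : Prop := Relation.ReflTransGen T.step v u

/-- a leaf is a vertex with no children. -/
def IsLeaf (T : PhyloTree V) (v : V) : Prop := ∀ u, T.parent u ≠ some v

/-- the leaf set (the taxon set `X`). -/
def leaves (T : PhyloTree V) : Set V := {v | T.IsLeaf v}

/-- Phylogenetic diversity of a set `Y`: the total length of all edges `e`
whose set of descendant leaves meets `Y` (the edge into a non-root vertex `v`
has length `T.len v`). -/
def PD (T : PhyloTree V) (Y : Set V) : ℝ :=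
  ∑ v : V, if v ≠ T.root ∧ ∃ x ∈ Y, T.IsLeaf x ∧ T.anc v x then T.len v else 0

/-- the ultrametric condition: all leaves are at the same distance from the root. -/
def Ultrametric (T : PhyloTree V) : Prop :=
  ∀ x y, T.IsLeaf x → T.IsLeaf y → T.hgt x = T.hgt y

/-- `R d`: the set of vertices within distance `d` above some leaf. -/
def R (T : PhyloTree V) (d : ℝ) : Set V :=
  {v | ∃ x, T.IsLeaf x ∧ T.anc v x ∧ T.hgt x - T.hgt v ≤ d}

/-- adjacency in the forest induced by `T` on a vertex set `S`. -/
def adjIn (T : PhyloTree V) (S : Set V) (u v : V) : Prop :=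
  u ∈ S ∧ v ∈ S ∧ (T.parent u = some v ∨ T.parent v = some u)

/-- the connected components of the forest induced by `T` on `S`. -/
def components (T : PhyloTree V) (S : Set V) : Set (Set V) :=
  {C | ∃ v ∈ S, C = S ∩ {u | Relation.ReflTransGen (T.adjIn S) v u}}

/-- `c d`: the number of connected components of the forest `T[R(d)]`. -/
def ccount (T : PhyloTree V) (d : ℝ) : ℕ := (T.components (T.R d)).ncard

/-- `k` is a branching value if `T[R(d)]` has exactly `k` components for some `d ≥ 0`. -/
def IsBranchingValue (T : PhyloTree V) (k : ℕ) : Prop := ∃ d : ℝ, 0 ≤ d ∧ T.ccount d = k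

/-- the branching distance `d_k = min {d : c(d) = k}`. -/
def branchDist (T : PhyloTree V) (k : ℕ) : ℝ := sInf {d | 0 ≤ d ∧ T.ccount d = k}

/-- `k⁻`: the largest branching value `≤ k`. -/
def kminus (T : PhyloTree V) (k : ℕ) : ℕ := sSup {j | j ≤ k ∧ T.IsBranchingValue j}

/-- `k⁺`: the smallest branching value `≥ k`. -/
def kplus (T : PhyloTree V) (k : ℕ) : ℕ := sInf {j | k ≤ j ∧ T.IsBranchingValue j}

/-- `A` is a size-`k` maxPD set. -/
def IsMaxPD (T : PhyloTree V) (k : ℕ) (A : Set V) : Prop :=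
  A ⊆ T.leaves ∧ A.ncard = k ∧ ∀ Y ⊆ T.leaves, Y.ncard = k → T.PD Y ≤ T.PD A

/-- `A` is a size-`k` minPD set. -/
def IsMinPD (T : PhyloTree V) (k : ℕ) (A : Set V) : Prop :=
  A ⊆ T.leaves ∧ A.ncard = k ∧ ∀ Y ⊆ T.leaves, Y.ncard = k → T.PD A ≤ T.PD Y

/-- `m T k`: the number of size-`k` maxPD sets of `T`. -/
def m (T : PhyloTree V) (k : ℕ) : ℕ := {A : Set V | T.IsMaxPD k A}.ncard

/-- `T` is binary: every non-leaf vertex has exactly two children. -/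
def Binary (T : PhyloTree V) : Prop :=
  ∀ v, ¬ T.IsLeaf v → Set.ncard {u | T.parent u = some v} = 2

end PhyloTree

namespace PhyloTree

variable {V : Type} [Fintype V] [DecidableEq V]

/-- the PD score, inside the pendant subtree of `T` rooted at `w`, of a set
`Y` of leaves: the total length of all edges of that subtree whose set of
descendant leaves meets `Y`. -/
def PDbelow (T : PhyloTree V) (w : V) (Y : Set V) : ℝ :=
  ∑ v : V, if v ≠ w ∧ T.anc w v ∧ ∃ x ∈ Y, T.IsLeaf x ∧ T.anc v x then T.len v else 0

/-- the leaves of the pendant subtree of `T` rooted at `w`. -/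
def leavesBelow (T : PhyloTree V) (w : V) : Set V := {x | T.IsLeaf x ∧ T.anc w x}

/-- `φ_{T_w}(k)`: the minimum PD score of a size-`k` set of leaves of the
pendant subtree of `T` rooted at `w` (so `φ(0) = 0`, and `φ(k) = 0` on a
single-vertex subtree). -/
def phiBelow (T : PhyloTree V) (w : V) (k : ℕ) : ℝ :=
  sInf {r | ∃ W : Set V, W ⊆ T.leavesBelow w ∧ W.ncard = k ∧ r = T.PDbelow w W}

end PhyloTree

namespace PhyloTree

variable {V : Type} [Fintype V] [DecidableEq V] (T : PhyloTree V)

lemma step_det {a b c : V} (h1 : T.step a b) (h2 : T.step a c) : b = c := by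
  unfold step at h1 h2; rw [h1] at h2; exact Option.some.inj h2

lemma compare {x a b : V} (h1 : Relation.ReflTransGen T.step x a)
    (h2 : Relation.ReflTransGen T.step x b) :
    Relation.ReflTransGen T.step a b ∨ Relation.ReflTransGen T.step b a := by
  revert h2
  induction h1 using Relation.ReflTransGen.head_induction_on with
  | refl => intro h2; exact Or.inl h2
  | head h' h ih =>
    intro h2
    rcases Relation.ReflTransGen.cases_head h2 with rfl | ⟨d, hd, h2'⟩
    · exact Or.inr (h.head h')
    · have : d = _ := T.step_det hd h'
      subst this
      exact ih h2'

lemma child_ne_root {c : V} (h : T.parent c = some T.root) : c ≠ T.root := by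
  intro e; rw [e, T.parent_root] at h; exact nomatch h

lemma anc_root_iff {c : V} : T.anc c T.root ↔ c = T.root := by
  constructor
  · intro h
    rcases Relation.ReflTransGen.cases_head h with h' | ⟨d, hd, _⟩
    · exact h'.symm
    · unfold step at hd; rw [T.parent_root] at hd; exact nomatch hd
  · rintro rfl; exact Relation.ReflTransGen.refl

lemma not_anc_sib {c₁ c₂ : V} (h1 : T.parent c₁ = some T.root)
    (h2 : T.parent c₂ = some T.root) (hne : c₁ ≠ c₂) : ¬ T.anc c₁ c₂ := by
  intro h
  rcases Relation.ReflTransGen.cases_head h with h' | ⟨d, hd, h'⟩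
  · exact hne h'.symm
  · have hd' : d = T.root := by
      unfold step at hd; rw [h2] at hd; exact (Option.some.inj hd).symm
    subst hd'
    exact T.child_ne_root h1 (T.anc_root_iff.mp h')

lemma exists_child_anc {c₁ c₂ : V} (hch : {u | T.parent u = some T.root} = {c₁, c₂})
    {v : V} (hv : v ≠ T.root) : T.anc c₁ v ∨ T.anc c₂ v := by
  have h := T.reaches_root v
  rcases Relation.ReflTransGen.cases_tail h with h' | ⟨c, hc, hstep⟩
  · exact absurd h'.symm hv
  · have hcmem : c ∈ {u | T.parent u = some T.root} := hstep
    rw [hch] at hcmem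
    rcases hcmem with rfl | rfl
    · exact Or.inl hc
    · exact Or.inr hc

lemma anc_unique_child {c₁ c₂ : V} (h1 : T.parent c₁ = some T.root)
    (h2 : T.parent c₂ = some T.root) (hne : c₁ ≠ c₂) {v : V}
    (hv1 : T.anc c₁ v) (hv2 : T.anc c₂ v) : False := by
  rcases T.compare hv1 hv2 with h | h
  · exact T.not_anc_sib h2 h1 hne.symm h
  · exact T.not_anc_sib h1 h2 hne h

lemma child_mem (hch : {u | T.parent u = some T.root} = ({c₁, c₂} : Set V)) :
    T.parent c₁ = some T.root ∧ T.parent c₂ = some T.root := by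
  constructor
  · have : c₁ ∈ ({c₁, c₂} : Set V) := Or.inl rfl
    rw [← hch] at this; exact this
  · have : c₂ ∈ ({c₁, c₂} : Set V) := Or.inr rfl
    rw [← hch] at this; exact this

lemma PD_split {c₁ c₂ : V} (h1 : T.parent c₁ = some T.root)
    (h2 : T.parent c₂ = some T.root) (hne : c₁ ≠ c₂)
    (hch : {u | T.parent u = some T.root} = {c₁, c₂}) (W : Set V) :
    T.PDbelow T.root W =
      T.PDbelow c₁ (W ∩ T.leavesBelow c₁) + T.PDbelow c₂ (W ∩ T.leavesBelow c₂)
      + (if (W ∩ T.leavesBelow c₁).Nonempty then T.len c₁ else 0)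
      + (if (W ∩ T.leavesBelow c₂).Nonempty then T.len c₂ else 0) := by
  have e1 : (if (W ∩ T.leavesBelow c₁).Nonempty then T.len c₁ else 0)
      = ∑ v : V, if v = c₁ ∧ (W ∩ T.leavesBelow c₁).Nonempty then T.len v else 0 := by
    by_cases hQ : (W ∩ T.leavesBelow c₁).Nonempty <;>
      simp [hQ, Finset.sum_ite_eq']
  have e2 : (if (W ∩ T.leavesBelow c₂).Nonempty then T.len c₂ else 0)
      = ∑ v : V, if v = c₂ ∧ (W ∩ T.leavesBelow c₂).Nonempty then T.len v else 0 := by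
    by_cases hQ : (W ∩ T.leavesBelow c₂).Nonempty <;>
      simp [hQ, Finset.sum_ite_eq']
  unfold PDbelow
  rw [e1, e2, ← Finset.sum_add_distrib, ← Finset.sum_add_distrib, ← Finset.sum_add_distrib]
  apply Finset.sum_congr rfl
  intro v _
  have har : T.anc T.root v := T.reaches_root v
  by_cases hvr : v = T.root
  · subst hvr
    have hc1r : ¬ T.anc c₁ T.root := fun h => T.child_ne_root h1 (T.anc_root_iff.mp h)
    have hc2r : ¬ T.anc c₂ T.root := fun h => T.child_ne_root h2 (T.anc_root_iff.mp h)
    have hr1 : ¬ (T.root = c₁) := fun e => T.child_ne_root h1 e.symm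
    have hr2 : ¬ (T.root = c₂) := fun e => T.child_ne_root h2 e.symm
    simp [hc1r, hc2r, hr1, hr2]
  · rcases T.exists_child_anc hch hvr with ha | ha
    · have hnot2 : ¬ T.anc c₂ v := fun h => T.anc_unique_child h1 h2 hne ha h
      have hvc2 : ¬ (v = c₂) := fun e => hnot2 (e ▸ Relation.ReflTransGen.refl)
      by_cases hvc1 : v = c₁
      · subst hvc1
        have hiff : (∃ x ∈ W, T.IsLeaf x ∧ T.anc v x) ↔ (W ∩ T.leavesBelow v).Nonempty := by
          constructor
          · rintro ⟨x, hxW, hl, hx⟩; exact ⟨x, hxW, hl, hx⟩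
          · rintro ⟨x, hxW, hl, hx⟩; exact ⟨x, hxW, hl, hx⟩
        simp [hvr, hvc2, hnot2, har, hiff]
      · have hiff : (∃ x ∈ W, T.IsLeaf x ∧ T.anc v x)
            ↔ (∃ x ∈ W ∩ T.leavesBelow c₁, T.IsLeaf x ∧ T.anc v x) := by
          constructor
          · rintro ⟨x, hxW, hl, hx⟩
            exact ⟨x, ⟨hxW, hl, hx.trans ha⟩, hl, hx⟩
          · rintro ⟨x, hx', hl, hx⟩
            exact ⟨x, hx'.1, hl, hx⟩
        simp [hvr, hvc1, hvc2, ha, hnot2, har, hiff]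
    · have hnot1 : ¬ T.anc c₁ v := fun h => T.anc_unique_child h1 h2 hne h ha
      have hvc1 : ¬ (v = c₁) := fun e => hnot1 (e ▸ Relation.ReflTransGen.refl)
      by_cases hvc2 : v = c₂
      · subst hvc2
        have hiff : (∃ x ∈ W, T.IsLeaf x ∧ T.anc v x) ↔ (W ∩ T.leavesBelow v).Nonempty := by
          constructor
          · rintro ⟨x, hxW, hl, hx⟩; exact ⟨x, hxW, hl, hx⟩
          · rintro ⟨x, hxW, hl, hx⟩; exact ⟨x, hxW, hl, hx⟩
        simp [hvr, hvc1, hnot1, har, hiff]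
      · have hiff : (∃ x ∈ W, T.IsLeaf x ∧ T.anc v x)
            ↔ (∃ x ∈ W ∩ T.leavesBelow c₂, T.IsLeaf x ∧ T.anc v x) := by
          constructor
          · rintro ⟨x, hxW, hl, hx⟩
            exact ⟨x, ⟨hxW, hl, hx.trans ha⟩, hl, hx⟩
          · rintro ⟨x, hx', hl, hx⟩
            exact ⟨x, hx'.1, hl, hx⟩
        simp [hvr, hvc1, hvc2, ha, hnot1, har, hiff]

lemma phiSet_finite (w : V) (k : ℕ) :
    {r | ∃ W : Set V, W ⊆ T.leavesBelow w ∧ W.ncard = k ∧ r = T.PDbelow w W}.Finite := by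
  apply Set.Finite.subset (Set.finite_range (T.PDbelow w))
  rintro r ⟨W, -, -, rfl⟩
  exact ⟨W, rfl⟩

lemma phi_le {w : V} {W : Set V} (hW : W ⊆ T.leavesBelow w) {k : ℕ} (hk : W.ncard = k) :
    T.phiBelow w k ≤ T.PDbelow w W :=
  csInf_le (T.phiSet_finite w k).bddBelow ⟨W, hW, hk, rfl⟩

lemma phi_attained {w : V} {k : ℕ} (hk : k ≤ (T.leavesBelow w).ncard) :
    ∃ W : Set V, W ⊆ T.leavesBelow w ∧ W.ncard = k ∧ T.phiBelow w k = T.PDbelow w W := by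
  obtain ⟨W, hWsub, hWc⟩ := Set.exists_subset_card_eq hk
  have hne : {r | ∃ W : Set V, W ⊆ T.leavesBelow w ∧ W.ncard = k ∧ r = T.PDbelow w W}.Nonempty :=
    ⟨_, W, hWsub, hWc, rfl⟩
  exact hne.csInf_mem (T.phiSet_finite w k)

lemma leavesBelow_root : T.leavesBelow T.root = T.leaves :=
  Set.ext fun x => ⟨fun h => h.1, fun h => ⟨h, T.reaches_root x⟩⟩

lemma leaves_eq_union {c₁ c₂ : V} (h1 : T.parent c₁ = some T.root)
    (hch : {u | T.parent u = some T.root} = {c₁, c₂}) :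
    T.leaves = T.leavesBelow c₁ ∪ T.leavesBelow c₂ := by
  ext x
  constructor
  · intro hx
    have hxr : x ≠ T.root := by intro e; exact hx c₁ (e ▸ h1)
    rcases T.exists_child_anc hch hxr with h | h
    · exact Or.inl ⟨hx, h⟩
    · exact Or.inr ⟨hx, h⟩
  · rintro (⟨h, -⟩ | ⟨h, -⟩) <;> exact h

lemma leavesBelow_disjoint {c₁ c₂ : V} (h1 : T.parent c₁ = some T.root)
    (h2 : T.parent c₂ = some T.root) (hne : c₁ ≠ c₂) :
    Disjoint (T.leavesBelow c₁) (T.leavesBelow c₂) := by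
  rw [Set.disjoint_left]
  rintro x ⟨-, ha1⟩ ⟨-, ha2⟩
  exact T.anc_unique_child h1 h2 hne ha1 ha2

end PhyloTree

/-- Proposition 7 of the paper.  Let `T` be a rooted binary
phylogenetic tree whose root has the two children `c₁ ≠ c₂` (so the root edges
`e₁, e₂` have lengths `len c₁, len c₂`, and `T₁, T₂` are the pendant subtrees
rooted at `c₁, c₂`).  Then for all `1 ≤ k ≤ |X|`,
`φ_T(k) = min { φ_{T₁}(k₁) + φ_{T₂}(k₂) + ℓ₁·𝟙_{k₁>0} + ℓ₂·𝟙_{k₂>0} :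
k₁ + k₂ = k }`.  (Note `φ_T = φ` of the subtree rooted at the root.) -/
theorem minPD_dynamic_programming_binary
    {V : Type} [Fintype V] [DecidableEq V] (T : PhyloTree V)
    (hB : T.Binary) (c₁ c₂ : V) (hne : c₁ ≠ c₂)
    (hch : {u | T.parent u = some T.root} = {c₁, c₂})
    (k : ℕ) (hk : 1 ≤ k) (hkn : k ≤ T.leaves.ncard) :
    T.phiBelow T.root k =
      sInf {r | ∃ k₁ k₂ : ℕ, k₁ + k₂ = k ∧
        k₁ ≤ (T.leavesBelow c₁).ncard ∧ k₂ ≤ (T.leavesBelow c₂).ncard ∧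
        r = T.phiBelow c₁ k₁ + T.phiBelow c₂ k₂ +
            (if 0 < k₁ then T.len c₁ else 0) + (if 0 < k₂ then T.len c₂ else 0)} := by
  obtain ⟨h1, h2⟩ := T.child_mem hch
  have hdisj : Disjoint (T.leavesBelow c₁) (T.leavesBelow c₂) :=
    T.leavesBelow_disjoint h1 h2 hne
  have hunion : T.leaves = T.leavesBelow c₁ ∪ T.leavesBelow c₂ := T.leaves_eq_union h1 hch
  have hcardsum : T.leaves.ncard = (T.leavesBelow c₁).ncard + (T.leavesBelow c₂).ncard := by
    rw [hunion]; exact Set.ncard_union_eq hdisj (Set.toFinite _) (Set.toFinite _)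
  have hksum : k ≤ (T.leavesBelow c₁).ncard + (T.leavesBelow c₂).ncard := by omega
  have hBfin : {r | ∃ k₁ k₂ : ℕ, k₁ + k₂ = k ∧
      k₁ ≤ (T.leavesBelow c₁).ncard ∧ k₂ ≤ (T.leavesBelow c₂).ncard ∧
      r = T.phiBelow c₁ k₁ + T.phiBelow c₂ k₂ +
          (if 0 < k₁ then T.len c₁ else 0) + (if 0 < k₂ then T.len c₂ else 0)}.Finite := by
    apply Set.Finite.subset ((Set.finite_Iic k).image
      (fun i => T.phiBelow c₁ i + T.phiBelow c₂ (k - i) +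
        (if 0 < i then T.len c₁ else 0) + (if 0 < k - i then T.len c₂ else 0)))
    rintro r ⟨k₁, k₂, hsum, -, -, rfl⟩
    refine ⟨k₁, by simp [Set.mem_Iic]; omega, ?_⟩
    have hk₂ : k₂ = k - k₁ := by omega
    subst hk₂; rfl
  have hBne : {r | ∃ k₁ k₂ : ℕ, k₁ + k₂ = k ∧
      k₁ ≤ (T.leavesBelow c₁).ncard ∧ k₂ ≤ (T.leavesBelow c₂).ncard ∧
      r = T.phiBelow c₁ k₁ + T.phiBelow c₂ k₂ +
          (if 0 < k₁ then T.len c₁ else 0) + (if 0 < k₂ then T.len c₂ else 0)}.Nonempty :=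
    ⟨_, min k (T.leavesBelow c₁).ncard, k - min k (T.leavesBelow c₁).ncard,
      by omega, by omega, by omega, rfl⟩
  apply le_antisymm
  · apply le_csInf hBne
    rintro b ⟨k₁, k₂, hsum, hk₁, hk₂, rfl⟩
    obtain ⟨W₁, hW₁s, hW₁c, hφ₁⟩ := T.phi_attained hk₁
    obtain ⟨W₂, hW₂s, hW₂c, hφ₂⟩ := T.phi_attained hk₂
    have hd12 : Disjoint W₁ W₂ := hdisj.mono hW₁s hW₂s
    have hWsub : W₁ ∪ W₂ ⊆ T.leavesBelow T.root := by
      rw [T.leavesBelow_root, hunion]; exact Set.union_subset_union hW₁s hW₂s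
    have hWcard : (W₁ ∪ W₂).ncard = k := by
      rw [Set.ncard_union_eq hd12 (Set.toFinite _) (Set.toFinite _), hW₁c, hW₂c, hsum]
    have hi1 : (W₁ ∪ W₂) ∩ T.leavesBelow c₁ = W₁ := by
      rw [Set.union_inter_distrib_right, Set.inter_eq_self_of_subset_left hW₁s,
        Set.disjoint_iff_inter_eq_empty.mp (hdisj.symm.mono_left hW₂s), Set.union_empty]
    have hi2 : (W₁ ∪ W₂) ∩ T.leavesBelow c₂ = W₂ := by
      rw [Set.union_inter_distrib_right, Set.inter_eq_self_of_subset_left hW₂s,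
        Set.disjoint_iff_inter_eq_empty.mp (hdisj.mono_left hW₁s), Set.empty_union]
    have hne1 : W₁.Nonempty ↔ 0 < k₁ := by
      rw [← hW₁c]; exact (Set.ncard_pos (Set.toFinite _)).symm
    have hne2 : W₂.Nonempty ↔ 0 < k₂ := by
      rw [← hW₂c]; exact (Set.ncard_pos (Set.toFinite _)).symm
    calc T.phiBelow T.root k ≤ T.PDbelow T.root (W₁ ∪ W₂) := T.phi_le hWsub hWcard
      _ = _ := by
        rw [T.PD_split h1 h2 hne hch, hi1, hi2, ← hφ₁, ← hφ₂]
        simp only [hne1, hne2]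
  · have hkr : k ≤ (T.leavesBelow T.root).ncard := by rw [T.leavesBelow_root]; exact hkn
    obtain ⟨W₀, hW₀s, hW₀c⟩ := Set.exists_subset_card_eq hkr
    have hAne : {r | ∃ W : Set V, W ⊆ T.leavesBelow T.root ∧ W.ncard = k ∧
        r = T.PDbelow T.root W}.Nonempty := ⟨_, W₀, hW₀s, hW₀c, rfl⟩
    apply le_csInf hAne
    rintro r ⟨W, hWs, hWc, rfl⟩
    have hWl : W ⊆ T.leavesBelow c₁ ∪ T.leavesBelow c₂ := by
      rw [← hunion, ← T.leavesBelow_root]; exact hWs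
    have hWsplit : W = (W ∩ T.leavesBelow c₁) ∪ (W ∩ T.leavesBelow c₂) := by
      rw [← Set.inter_union_distrib_left]
      exact (Set.inter_eq_self_of_subset_left hWl).symm
    have hsum : (W ∩ T.leavesBelow c₁).ncard + (W ∩ T.leavesBelow c₂).ncard = k := by
      rw [← Set.ncard_union_eq (hdisj.mono Set.inter_subset_right Set.inter_subset_right)
        (Set.toFinite _) (Set.toFinite _), ← hWsplit, hWc]
    refine le_trans (csInf_le hBfin.bddBelow
      ⟨(W ∩ T.leavesBelow c₁).ncard, (W ∩ T.leavesBelow c₂).ncard, hsum,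
        Set.ncard_le_ncard Set.inter_subset_right (Set.toFinite _),
        Set.ncard_le_ncard Set.inter_subset_right (Set.toFinite _), rfl⟩) ?_
    rw [T.PD_split h1 h2 hne hch W]
    have i1 : (if 0 < (W ∩ T.leavesBelow c₁).ncard then T.len c₁ else 0)
        = (if (W ∩ T.leavesBelow c₁).Nonempty then T.len c₁ else 0) := by
      simp only [Set.ncard_pos (Set.toFinite _)]
    have i2 : (if 0 < (W ∩ T.leavesBelow c₂).ncard then T.len c₂ else 0)
        = (if (W ∩ T.leavesBelow c₂).Nonempty then T.len c₂ else 0) := by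
      simp only [Set.ncard_pos (Set.toFinite _)]
    exact add_le_add (add_le_add (add_le_add
      (T.phi_le Set.inter_subset_right rfl)
      (T.phi_le Set.inter_subset_right rfl)) i1.le) i2.le
end
end

section
/- Let T be a rooted phylogenetic X-tree with positive edge lengths whose root has out-degree t, let e₁,…,e_t be the edges incident with the root, of lengths ℓ₁,…,ℓ_t, and let T₁,…,T_t be the maximal pendant subtrees below these edges. Define φ_T(k) = min{ PD_T(W) : W ⊆ X, |W| = k } for 1 ≤ k ≤ |X|, with φ_T(0) = 0 and φ_T(k) = 0 when T is a single vertex. Then for all k ∈ {1,…,|X|}: φ_T(k) = min over t-tuples (k₁,…,k_t) of non-negative integers with k₁ + ⋯ + k_t = k of Σ_{i=1}^{t} [ φ_{T_i}(k_i) + ℓ_i·𝟙_{k_i>0} ], where 𝟙_{k_i>0} equals 1 if k_i > 0 and 0 otherwise. -/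
/-!
Rooted phylogenetic `X`-trees with positive edge lengths.

A tree on a finite vertex type `V` is encoded by its parent function: the root
has no parent, every other vertex has one, and iterating the parent function
reaches the root.  The edge into a non-root vertex `v` has length `len v`, and
`hgt v` is the distance from the root to `v`.  Leaves are the vertices with no
children; the taxon set `X` of the paper is the set `leaves` of leaves.
Every non-leaf, non-root vertex has out-degree (number of children) at least 2.
-/

noncomputable section

attribute [local instance] Classical.propDecidable

namespace PhyloTree

variable {V : Type} [Fintype V] [DecidableEq V] (T : PhyloTree V)

lemma step_det_s15 {a b b' : V} (h : T.step a b) (h' : T.step a b') : b = b' := by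
  unfold step at h h'
  rw [h] at h'
  exact Option.some.inj h'

lemma chain_comparable {a b : V} : ∀ {v : V}, Relation.ReflTransGen T.step v a →
    Relation.ReflTransGen T.step v b →
    Relation.ReflTransGen T.step a b ∨ Relation.ReflTransGen T.step b a := by
  intro v ha
  induction ha using Relation.ReflTransGen.head_induction_on with
  | refl => exact fun hb => Or.inl hb
  | head h hrest ih =>
    intro hb
    rcases hb.cases_head with rfl | ⟨w', hw', hb'⟩
    · exact Or.inr (Relation.ReflTransGen.head h hrest)
    · obtain rfl := T.step_det_s15 h hw'
      exact ih hb'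

lemma root_chain {v : V} (h : Relation.ReflTransGen T.step T.root v) : T.root = v := by
  rcases h.cases_head with h' | ⟨w, hw, -⟩
  · exact h'
  · exact absurd hw (by unfold step; rw [T.parent_root]; simp)

lemma last_step : ∀ {v : V}, Relation.ReflTransGen T.step v T.root →
    v = T.root ∨ ∃ u, T.parent u = some T.root ∧ Relation.ReflTransGen T.step v u := by
  intro v h
  induction h using Relation.ReflTransGen.head_induction_on with
  | refl => exact Or.inl rfl
  | head h hrest ih =>
    rcases ih with rfl | ⟨u, hu, hchain⟩
    · exact Or.inr ⟨_, h, Relation.ReflTransGen.refl⟩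
    · exact Or.inr ⟨u, hu, Relation.ReflTransGen.head h hchain⟩

lemma PDbelow_nonneg (w : V) (Y : Set V) : 0 ≤ T.PDbelow w Y := by
  apply Finset.sum_nonneg
  intro v _
  split_ifs with h
  · rcases h with ⟨hvw, hanc, -⟩
    refine le_of_lt (T.len_pos v ?_)
    rintro rfl
    exact hvw (T.root_chain hanc)
  · exact le_rfl

lemma phiBelow_nonneg (w : V) (k : ℕ) : 0 ≤ T.phiBelow w k :=
  Real.sInf_nonneg (fun r hr => by
    rcases hr with ⟨Wn, -, -, rfl⟩; exact T.PDbelow_nonneg _ _)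

lemma phiBelow_attained (w : V) (k : ℕ) (hk : k ≤ (T.leavesBelow w).ncard) :
    ∃ Wn : Set V, Wn ⊆ T.leavesBelow w ∧ Wn.ncard = k ∧
      T.phiBelow w k = T.PDbelow w Wn := by
  set S := {r | ∃ W : Set V, W ⊆ T.leavesBelow w ∧ W.ncard = k ∧ r = T.PDbelow w W} with hS
  have hne : S.Nonempty := by
    obtain ⟨Wn, hsub, hcard⟩ := Set.exists_subset_card_eq hk
    exact ⟨_, Wn, hsub, hcard, rfl⟩
  have hfin : S.Finite := by
    have hsub : S ⊆ (fun Wn => T.PDbelow w Wn) '' Set.univ := by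
      rintro r ⟨Wn, -, -, rfl⟩; exact ⟨Wn, trivial, rfl⟩
    exact Set.Finite.subset ((Set.toFinite _).image _) hsub
  have hmem : T.phiBelow w k ∈ S := hne.csInf_mem hfin
  obtain ⟨Wn, hsub, hcard, heq⟩ := hmem
  exact ⟨Wn, hsub, hcard, heq⟩

lemma phiBelow_le (w : V) (Wn : Set V) (hsub : Wn ⊆ T.leavesBelow w) :
    T.phiBelow w Wn.ncard ≤ T.PDbelow w Wn := by
  apply csInf_le
  · exact ⟨0, fun r hr => by rcases hr with ⟨W', -, -, rfl⟩; exact T.PDbelow_nonneg _ _⟩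
  · exact ⟨Wn, hsub, rfl, rfl⟩

end PhyloTree

/-- Eqn (4) of the paper.  Let `T` be a rooted phylogenetic
tree whose root has out-degree `t`, with children `c 0, …, c (t-1)` (so the
root edges have lengths `len (c i)` and the pendant subtrees `T_i` are rooted
at the `c i`).  Then for all `1 ≤ k ≤ |X|`,
`φ_T(k) = min { Σ_i (φ_{T_i}(k_i) + ℓ_i·𝟙_{k_i>0}) : k₁ + ⋯ + k_t = k }`. -/
theorem minPD_dynamic_programming
    {V : Type} [Fintype V] [DecidableEq V] (T : PhyloTree V)
    (t : ℕ) (c : Fin t → V) (hinj : Function.Injective c)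
    (hch : {u | T.parent u = some T.root} = Set.range c)
    (k : ℕ) (hk : 1 ≤ k) (hkn : k ≤ T.leaves.ncard) :
    T.phiBelow T.root k =
      sInf {r | ∃ κ : Fin t → ℕ, (∑ i, κ i) = k ∧
        (∀ i, κ i ≤ (T.leavesBelow (c i)).ncard) ∧
        r = ∑ i, (T.phiBelow (c i) (κ i) + if 0 < κ i then T.len (c i) else 0)} :=  by
  classical
  rcases Nat.eq_zero_or_pos t with rfl | ht
  · -- t = 0 : the tree is a single vertex
    have hall : ∀ v : V, v = T.root := by
      intro v
      rcases T.last_step (T.reaches_root v) with h | ⟨u, hu, -⟩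
      · exact h
      · have : u ∈ Set.range c := by rw [← hch]; exact hu
        rcases this with ⟨i, -⟩
        exact i.elim0
    have hB : {r | ∃ κ : Fin 0 → ℕ, (∑ i, κ i) = k ∧
        (∀ i, κ i ≤ (T.leavesBelow (c i)).ncard) ∧
        r = ∑ i, (T.phiBelow (c i) (κ i) + if 0 < κ i then T.len (c i) else 0)} = ∅ := by
      ext r
      simp only [Set.mem_setOf_eq, Set.mem_empty_iff_false, iff_false]
      rintro ⟨κ, hsum, -, -⟩
      simp only [Finset.univ_eq_empty, Finset.sum_empty] at hsum
      omega
    rw [hB, Real.sInf_empty]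
    have hrootleaf : T.IsLeaf T.root := by
      intro u hu
      have := hall u
      subst this
      rw [T.parent_root] at hu
      cases hu
    have hPD0 : ∀ W : Set V, T.PDbelow T.root W = 0 := by
      intro W
      apply Finset.sum_eq_zero
      intro v _
      rw [if_neg]
      rintro ⟨hv, -, -⟩
      exact hv (hall v)
    have hk1 : k = 1 := by
      have hle : T.leaves.ncard ≤ 1 := by
        have : T.leaves ⊆ {T.root} := fun x _ => hall x
        calc T.leaves.ncard ≤ ({T.root} : Set V).ncard :=
              Set.ncard_le_ncard this (Set.toFinite _)
          _ = 1 := Set.ncard_singleton _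
      omega
    have hset : {r | ∃ W : Set V, W ⊆ T.leavesBelow T.root ∧ W.ncard = k ∧
        r = T.PDbelow T.root W} = {0} := by
      ext r
      simp only [Set.mem_setOf_eq, Set.mem_singleton_iff]
      constructor
      · rintro ⟨W, -, -, rfl⟩
        exact hPD0 W
      · rintro rfl
        refine ⟨{T.root}, ?_, by rw [hk1]; exact Set.ncard_singleton _, (hPD0 _).symm⟩
        intro x hx
        rcases hx with rfl
        exact ⟨hrootleaf, Relation.ReflTransGen.refl⟩
    show sInf _ = 0
    rw [hset, csInf_singleton]
  · -- t ≥ 1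
    have hcroot : ∀ i, T.parent (c i) = some T.root := by
      intro i
      have : c i ∈ {u | T.parent u = some T.root} := by rw [hch]; exact ⟨i, rfl⟩
      exact this
    have hcne : ∀ i, c i ≠ T.root := by
      intro i h
      have := hcroot i
      rw [h, T.parent_root] at this
      cases this
    have hchain_cc : ∀ i j, Relation.ReflTransGen T.step (c i) (c j) → i = j := by
      intro i j h
      rcases h.cases_head with h' | ⟨w, hw, hrest⟩
      · exact hinj h'
      · obtain rfl : w = T.root := T.step_det_s15 hw (hcroot i)
        exact absurd (T.root_chain hrest).symm (hcne j)
    have huniq : ∀ (v : V) (i j : Fin t), T.anc (c i) v → T.anc (c j) v → i = j := by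
      intro v i j hi hj
      rcases T.chain_comparable hi hj with h | h
      · exact hchain_cc i j h
      · exact (hchain_cc j i h).symm
    have hex : ∀ v : V, v ≠ T.root → ∃ i, T.anc (c i) v := by
      intro v hv
      rcases T.last_step (T.reaches_root v) with rfl | ⟨u, hu, hchain⟩
      · exact absurd rfl hv
      · have : u ∈ Set.range c := by rw [← hch]; exact hu
        rcases this with ⟨i, rfl⟩
        exact ⟨i, hchain⟩
    have hanc_ne_root : ∀ (i : Fin t) (v : V), T.anc (c i) v → v ≠ T.root := by
      intro i v h hv
      subst hv
      exact hcne i (T.root_chain h).symm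
    have hrootleaf : ¬ T.IsLeaf T.root := fun h => h (c ⟨0, ht⟩) (hcroot _)
    have hancroot : ∀ v : V, T.anc T.root v := fun v => T.reaches_root v
    have hleaves : T.leavesBelow T.root = T.leaves := by
      ext x
      exact ⟨fun h => h.1, fun h => ⟨h, hancroot x⟩⟩
    have hleafne : ∀ x : V, T.IsLeaf x → x ≠ T.root := by
      rintro x hx rfl
      exact hrootleaf hx
    -- the fiber function
    have hfex : ∀ v : V, ∃ i : Fin t, v ≠ T.root → T.anc (c i) v := by
      intro v
      by_cases hv : v = T.root
      · exact ⟨⟨0, ht⟩, fun h => absurd hv h⟩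
      · rcases hex v hv with ⟨i, hi⟩
        exact ⟨i, fun _ => hi⟩
    choose f hf using hfex
    have hfuniq : ∀ (v : V) (i : Fin t), v ≠ T.root → T.anc (c i) v → f v = i :=
      fun v i hv hi => huniq v (f v) i (hf v hv) hi
    -- partition of cardinalities
    have hpart : ∀ W : Set V, W ⊆ T.leaves →
        W.ncard = ∑ i, (W ∩ T.leavesBelow (c i)).ncard := by
      intro W hW
      rw [Set.ncard_eq_toFinset_card W (Set.toFinite W)]
      rw [Finset.card_eq_sum_card_fiberwise
        (f := f) (t := (Finset.univ : Finset (Fin t))) (fun x _ => Finset.mem_univ _)]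
      refine Finset.sum_congr rfl fun i _ => ?_
      rw [Set.ncard_eq_toFinset_card _ (Set.toFinite _)]
      congr 1
      ext x
      simp only [Finset.mem_filter, Set.Finite.mem_toFinset, Set.mem_inter_iff]
      constructor
      · rintro ⟨hx, rfl⟩
        have hleaf : T.IsLeaf x := hW hx
        exact ⟨hx, hleaf, hf x (hleafne x hleaf)⟩
      · rintro ⟨hx, -, hanc⟩
        exact ⟨hx, hfuniq x i (hanc_ne_root i x hanc) hanc⟩
    -- disjointness is implicit through huniq; PD decomposition:
    have hsplit : ∀ W : Set V,
        T.PDbelow T.root W = ∑ i, (T.PDbelow (c i) (W ∩ T.leavesBelow (c i)) +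
          if (W ∩ T.leavesBelow (c i)).Nonempty then T.len (c i) else 0) := by
      intro W
      have key : ∀ v : V,
          (if v ≠ T.root ∧ T.anc T.root v ∧ ∃ x ∈ W, T.IsLeaf x ∧ T.anc v x
            then T.len v else 0)
          = ∑ i, ((if v ≠ c i ∧ T.anc (c i) v ∧
                ∃ x ∈ W ∩ T.leavesBelow (c i), T.IsLeaf x ∧ T.anc v x
              then T.len v else 0)
            + (if v = c i ∧ (W ∩ T.leavesBelow (c i)).Nonempty
              then T.len (c i) else 0)) := by
        intro v
        by_cases hv : v ≠ T.root ∧ ∃ x ∈ W, T.IsLeaf x ∧ T.anc v x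
        · obtain ⟨hvr, x, hxW, hxl, hxa⟩ := hv
          obtain ⟨i₀, hi₀⟩ := hex v hvr
          rw [if_pos ⟨hvr, hancroot v, x, hxW, hxl, hxa⟩]
          rw [Finset.sum_eq_single i₀]
          · by_cases hvc : v = c i₀
            · subst hvc
              rw [if_neg (fun h => h.1 rfl),
                if_pos ⟨rfl, x, hxW, hxl, hxa⟩]
              simp
            · rw [if_pos ⟨hvc, hi₀, x, ⟨hxW, hxl, Relation.ReflTransGen.trans hxa hi₀⟩,
                  hxl, hxa⟩,
                if_neg (fun h => hvc h.1)]
              simp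
          · intro j _ hj
            rw [if_neg ?hA, if_neg ?hB, add_zero]
            case hA =>
              rintro ⟨-, hancj, -⟩
              exact hj (huniq v j i₀ hancj hi₀)
            case hB =>
              rintro ⟨hveq, -⟩
              exact hj (huniq v j i₀ (by rw [hveq]; exact Relation.ReflTransGen.refl) hi₀)
          · intro h
            exact absurd (Finset.mem_univ i₀) h
        · rw [if_neg (fun h => hv ⟨h.1, h.2.2⟩)]
          symm
          apply Finset.sum_eq_zero
          intro i _
          rw [if_neg ?hC, if_neg ?hD, add_zero]
          case hC =>
            rintro ⟨-, hanc, x, hxm, hxl, hxa⟩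
            exact hv ⟨hanc_ne_root i v hanc, x, hxm.1, hxl, hxa⟩
          case hD =>
            rintro ⟨rfl, x, hxW, hxl, hxa⟩
            exact hv ⟨hcne i, x, hxW, hxl, hxa⟩
      unfold PhyloTree.PDbelow
      rw [Finset.sum_congr rfl fun v _ => key v, Finset.sum_comm]
      refine Finset.sum_congr rfl fun i _ => ?_
      rw [Finset.sum_add_distrib]
      refine congrArg₂ (· + ·) ?_ ?_
      · refine Finset.sum_congr rfl fun v _ => ?_
        congr!
      · by_cases hP : (W ∩ T.leavesBelow (c i)).Nonempty
        · simp [hP, Finset.sum_ite_eq']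
        · simp [hP]
    -- the two sets
    set A := {r | ∃ W : Set V, W ⊆ T.leavesBelow T.root ∧ W.ncard = k ∧
        r = T.PDbelow T.root W} with hAdef
    set B := {r | ∃ κ : Fin t → ℕ, (∑ i, κ i) = k ∧
        (∀ i, κ i ≤ (T.leavesBelow (c i)).ncard) ∧
        r = ∑ i, (T.phiBelow (c i) (κ i) + if 0 < κ i then T.len (c i) else 0)} with hBdef
    have hAlb : ∀ r ∈ A, (0:ℝ) ≤ r := by
      rintro r ⟨W, -, -, rfl⟩
      exact T.PDbelow_nonneg _ _
    have hBlb : ∀ r ∈ B, (0:ℝ) ≤ r := by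
      rintro r ⟨κ, -, -, rfl⟩
      apply Finset.sum_nonneg
      intro i _
      apply add_nonneg (T.phiBelow_nonneg _ _)
      split_ifs
      · exact le_of_lt (T.len_pos _ (hcne i))
      · exact le_rfl
    have hBA : ∀ r ∈ B, r ∈ A := by
      rintro r ⟨κ, hκsum, hκle, rfl⟩
      choose Wn hWsub hWcard hWphi using fun i => T.phiBelow_attained (c i) (κ i) (hκle i)
      set W := ⋃ i, Wn i with hWdef
      have hWi : ∀ i, W ∩ T.leavesBelow (c i) = Wn i := by
        intro i
        ext x
        simp only [hWdef, Set.mem_inter_iff, Set.mem_iUnion]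
        constructor
        · rintro ⟨⟨j, hxj⟩, hxi⟩
          have hji : j = i := huniq x j i (hWsub j hxj).2 hxi.2
          exact hji ▸ hxj
        · intro hx
          exact ⟨⟨i, hx⟩, hWsub i hx⟩
      have hWl : W ⊆ T.leaves := by
        intro x hx
        obtain ⟨i, hxi⟩ := Set.mem_iUnion.mp hx
        exact (hWsub i hxi).1
      have hWcard' : W.ncard = k := by
        rw [hpart W hWl, ← hκsum]
        exact Finset.sum_congr rfl fun i _ => by rw [hWi i, hWcard i]
      refine ⟨W, ?_, hWcard', ?_⟩
      · rw [hleaves]; exact hWl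
      · rw [hsplit W]
        refine Finset.sum_congr rfl fun i _ => ?_
        rw [hWi i]
        have hiff : 0 < κ i ↔ (Wn i).Nonempty := by
          rw [← hWcard i]
          exact Set.ncard_pos (Set.toFinite _)
        rw [hWphi i]
        simp only [hiff]
    have hAB : ∀ r ∈ A, ∃ b ∈ B, b ≤ r := by
      rintro r ⟨W, hWsub, hWcard, rfl⟩
      have hWl : W ⊆ T.leaves := by rw [← hleaves]; exact hWsub
      refine ⟨∑ i, (T.phiBelow (c i) ((W ∩ T.leavesBelow (c i)).ncard) +
          if 0 < (W ∩ T.leavesBelow (c i)).ncard then T.len (c i) else 0),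
        ⟨fun i => (W ∩ T.leavesBelow (c i)).ncard, ?_, ?_, rfl⟩, ?_⟩
      · rw [← hpart W hWl]; exact hWcard
      · intro i
        exact Set.ncard_le_ncard Set.inter_subset_right (Set.toFinite _)
      · rw [hsplit W]
        apply Finset.sum_le_sum
        intro i _
        have hiff : 0 < (W ∩ T.leavesBelow (c i)).ncard ↔
            (W ∩ T.leavesBelow (c i)).Nonempty := Set.ncard_pos (Set.toFinite _)
        refine add_le_add (T.phiBelow_le (c i) _ Set.inter_subset_right) ?_
        simp only [hiff]
        exact le_rfl
    have hAne : A.Nonempty := by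
      have hk' : k ≤ (T.leavesBelow T.root).ncard := by rw [hleaves]; exact hkn
      obtain ⟨W, hsub, hcard⟩ := Set.exists_subset_card_eq hk'
      exact ⟨_, W, hsub, hcard, rfl⟩
    have hBne : B.Nonempty := by
      obtain ⟨r, hr⟩ := hAne
      obtain ⟨b, hb, -⟩ := hAB r hr
      exact ⟨b, hb⟩
    show sInf A = sInf B
    apply le_antisymm
    · apply le_csInf hBne
      intro b hb
      exact csInf_le ⟨0, hAlb⟩ (hBA b hb)
    · apply le_csInf hAne
      intro r hr
      obtain ⟨b, hb, hble⟩ := hAB r hr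
      exact le_trans (csInf_le ⟨0, hBlb⟩ hb) hble
end
end

section
/- Let T be a rooted caterpillar tree on n leaves (a rooted binary phylogenetic X-tree with exactly one cherry) whose positive edge lengths satisfy the ultrametric condition. Then for every k with 2 ≤ k ≤ n there is exactly one size-k minPD set of T, namely the set consisting of the k leaves whose pendant edges are shortest; and for k = 1 there are exactly n size-1 minPD sets (every singleton is a minPD set). -/
/-!
Rooted phylogenetic `X`-trees with positive edge lengths.

A tree on a finite vertex type `V` is encoded by its parent function: the root
has no parent, every other vertex has one, and iterating the parent function
reaches the root.  The edge into a non-root vertex `v` has length `len v`, and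
`hgt v` is the distance from the root to `v`.  Leaves are the vertices with no
children; the taxon set `X` of the paper is the set `leaves` of leaves.
Every non-leaf, non-root vertex has out-degree (number of children) at least 2.
-/

noncomputable section

attribute [local instance] Classical.propDecidable

namespace PhyloTree

variable {V : Type} [Fintype V] [DecidableEq V]

/-- a cherry: a two-element set of leaves with a common parent. -/
def IsCherry (T : PhyloTree V) (p : Set V) : Prop :=
  ∃ x y v, x ≠ y ∧ p = {x, y} ∧ T.IsLeaf x ∧ T.IsLeaf y ∧
    T.parent x = some v ∧ T.parent y = some v

/-- a rooted caterpillar tree: a rooted binary phylogenetic tree with exactly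
one cherry. -/
def IsCaterpillar (T : PhyloTree V) : Prop :=
  T.Binary ∧ ∃! p : Set V, T.IsCherry p

end PhyloTree


-- pure Finset lemmas
section Pure
variable {V : Type} [DecidableEq V]

/-- rank lemma for finsets of reals -/
lemma rank_card_real : ∀ (j : ℕ) (t : Finset ℝ), j ≤ t.card →
    (t.filter fun v => (t.filter fun w => w < v).card < j).card = j := by
  intro j
  induction j with
  | zero => intro t _; simp
  | succ j ih =>
    intro t ht
    have htne : t.Nonempty := Finset.card_pos.mp (by omega)
    set m := t.min' htne with hm
    have hmmem : m ∈ t := t.min'_mem htne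
    have hkey : (t.filter fun v => (t.filter fun w => w < v).card < j + 1)
        = insert m ((t.erase m).filter fun v => ((t.erase m).filter fun w => w < v).card < j) := by
      ext v
      simp only [Finset.mem_insert, Finset.mem_filter, Finset.mem_erase]
      constructor
      · rintro ⟨hv, hrank⟩
        by_cases hvm : v = m
        · exact Or.inl hvm
        · refine Or.inr ⟨⟨hvm, hv⟩, ?_⟩
          have hmv : m < v := lt_of_le_of_ne (t.min'_le v hv) (by
            intro h; exact hvm (by rw [← h]))
          have : t.filter (fun w => w < v) = insert m ((t.erase m).filter fun w => w < v) := by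
            ext w
            simp only [Finset.mem_insert, Finset.mem_filter, Finset.mem_erase]
            constructor
            · rintro ⟨hw, hwv⟩
              by_cases hwm : w = m
              · exact Or.inl hwm
              · exact Or.inr ⟨⟨hwm, hw⟩, hwv⟩
            · rintro (rfl | ⟨⟨_, hw⟩, hwv⟩)
              · exact ⟨hmmem, hmv⟩
              · exact ⟨hw, hwv⟩
          rw [this, Finset.card_insert_of_notMem (by simp)] at hrank
          omega
      · rintro (rfl | ⟨⟨hvm, hv⟩, hrank⟩)
        · exact ⟨hmmem, by
            have : t.filter (fun w => w < m) = ∅ := by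
              apply Finset.filter_false_of_mem
              intro w hw
              exact not_lt.mpr (t.min'_le w hw)
            rw [this]; simp⟩
        · refine ⟨hv, ?_⟩
          have hmv : m < v := lt_of_le_of_ne (t.min'_le v hv) (fun h => hvm (by rw [← h]))
          have : t.filter (fun w => w < v) = insert m ((t.erase m).filter fun w => w < v) := by
            ext w
            simp only [Finset.mem_insert, Finset.mem_filter, Finset.mem_erase]
            constructor
            · rintro ⟨hw, hwv⟩
              by_cases hwm : w = m
              · exact Or.inl hwm
              · exact Or.inr ⟨⟨hwm, hw⟩, hwv⟩
            · rintro (rfl | ⟨⟨_, hw⟩, hwv⟩)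
              · exact ⟨hmmem, hmv⟩
              · exact ⟨hw, hwv⟩
          rw [this, Finset.card_insert_of_notMem (by simp)]
          omega
    rw [hkey, Finset.card_insert_of_notMem (by simp), ih (t.erase m) (by
      rw [Finset.card_erase_of_mem hmmem]; omega)]

/-- rank lemma transported along an injective-on function -/
lemma rank_card_inj (s : Finset V) (g : V → ℝ) (hg : Set.InjOn g s) (j : ℕ) (hj : j ≤ s.card) :
    (s.filter fun y => (s.filter fun z => g z < g y).card < j).card = j := by
  classical
  set t := s.image g with ht
  have htc : t.card = s.card := Finset.card_image_of_injOn hg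
  have hrank : ∀ y ∈ s, (s.filter fun z => g z < g y).card = (t.filter fun w => w < g y).card := by
    intro y hy
    have : (s.filter fun z => g z < g y).image g = t.filter fun w => w < g y := by
      ext w
      simp only [Finset.mem_image, Finset.mem_filter, ht]
      constructor
      · rintro ⟨z, ⟨hz, hzy⟩, rfl⟩
        exact ⟨⟨z, hz, rfl⟩, hzy⟩
      · rintro ⟨⟨z, hz, rfl⟩, hzy⟩
        exact ⟨z, ⟨hz, hzy⟩, rfl⟩
    rw [← this, Finset.card_image_of_injOn (hg.mono (fun a ha => Finset.mem_coe.mp (Finset.filter_subset _ _ ha)))]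
  have himg : (s.filter fun y => (s.filter fun z => g z < g y).card < j).image g
      = t.filter fun v => (t.filter fun w => w < v).card < j := by
    ext v
    simp only [Finset.mem_image, Finset.mem_filter, ht]
    constructor
    · rintro ⟨y, ⟨hy, hr⟩, rfl⟩
      exact ⟨⟨y, hy, rfl⟩, by rw [← hrank y hy]; exact hr⟩
    · rintro ⟨⟨y, hy, rfl⟩, hr⟩
      exact ⟨y, ⟨hy, by rw [hrank y hy]; exact hr⟩, rfl⟩
  have h2 := rank_card_real j t (htc ▸ hj)
  rw [← himg, Finset.card_image_of_injOn
    (hg.mono (fun a ha => Finset.mem_coe.mp (Finset.filter_subset _ _ ha)))] at h2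
  exact h2

/-- greedy comparison lemma -/
lemma sum_le_of_sep (g : V → ℝ) (B S : Finset V) (hcard : B.card = S.card)
    (hsep : ∀ b ∈ B, ∀ z ∈ S, z ∉ B → g b < g z) :
    (∑ b ∈ B, g b) ≤ (∑ z ∈ S, g z) ∧ ((∑ b ∈ B, g b) = (∑ z ∈ S, g z) → B = S) := by
  classical
  have hBS : (B \ S).card = (S \ B).card := by
    have h1 := Finset.card_sdiff_add_card_inter B S
    have h2 := Finset.card_sdiff_add_card_inter S B
    rw [Finset.inter_comm] at h2
    omega
  by_cases hBeq : B = S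
  · subst hBeq; exact ⟨le_refl _, fun _ => rfl⟩
  · have hne : (B \ S).Nonempty := by
      rw [Finset.sdiff_nonempty]
      intro hsub
      exact hBeq (Finset.eq_of_subset_of_card_le hsub (le_of_eq hcard.symm))
    have hne' : (S \ B).Nonempty := by
      rw [← Finset.card_pos, ← hBS, Finset.card_pos]; exact hne
    obtain ⟨z₀, hz₀⟩ := Finset.exists_min_image (S \ B) g hne'
    have hz₀S : z₀ ∈ S \ B := hz₀.1
    have hstrict : ∑ b ∈ B \ S, g b < ∑ z ∈ S \ B, g z := by
      calc ∑ b ∈ B \ S, g b < ∑ _b ∈ B \ S, g z₀ := by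
            apply Finset.sum_lt_sum_of_nonempty hne
            intro b hb
            have hbB : b ∈ B := (Finset.mem_sdiff.mp hb).1
            have := hsep b hbB z₀ (Finset.mem_sdiff.mp hz₀S).1 (Finset.mem_sdiff.mp hz₀S).2
            exact this
        _ = (B \ S).card • g z₀ := by rw [Finset.sum_const]
        _ = (S \ B).card • g z₀ := by rw [hBS]
        _ = ∑ _z ∈ S \ B, g z₀ := by rw [Finset.sum_const]
        _ ≤ ∑ z ∈ S \ B, g z := by
            apply Finset.sum_le_sum
            intro z hz
            exact hz₀.2 z hz
    have hdecB : (∑ b ∈ B \ S, g b) + ∑ b ∈ B ∩ S, g b = ∑ b ∈ B, g b := by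
      rw [← Finset.sdiff_inter_self_left B S]
      exact Finset.sum_sdiff Finset.inter_subset_left
    have hdecS : (∑ z ∈ S \ B, g z) + ∑ z ∈ B ∩ S, g z = ∑ z ∈ S, g z := by
      rw [← Finset.sdiff_inter_self_left S B, Finset.inter_comm B S]
      exact Finset.sum_sdiff Finset.inter_subset_left
    constructor
    · rw [← hdecB, ← hdecS]; linarith
    · intro h; exfalso; rw [← hdecB, ← hdecS] at h; linarith
end Pure

namespace CatAux
open PhyloTree

variable {V : Type} [Fintype V] [DecidableEq V] (T : PhyloTree V)

lemma step_ne_root {a b : V} (h : T.step a b) : a ≠ T.root := by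
  intro rfl'
  rw [rfl'] at h
  simp [PhyloTree.step, T.parent_root] at h

lemma hgt_lt_of_step {a b : V} (h : T.step a b) : T.hgt b < T.hgt a := by
  have := T.hgt_eq a b h
  have hpos := T.len_pos a (step_ne_root T h)
  linarith

lemma anc_hgt_le {u v : V} (h : T.anc u v) : T.hgt u ≤ T.hgt v := by
  induction h with
  | refl => exact le_refl _
  | tail _ hstep ih => exact le_trans (le_of_lt (hgt_lt_of_step T hstep)) ih

lemma anc_hgt_lt {u v : V} (h : T.anc u v) (hne : u ≠ v) : T.hgt u < T.hgt v := by
  induction h with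
  | refl => exact absurd rfl hne
  | tail hchain hstep ih =>
    rename_i b c _
    have h1 := hgt_lt_of_step T hstep
    exact lt_of_lt_of_le h1 (anc_hgt_le T hchain)

lemma anc_antisymm {u v : V} (h1 : T.anc u v) (h2 : T.anc v u) : u = v := by
  by_contra hne
  have := anc_hgt_lt T h1 hne
  have := anc_hgt_lt T h2 (Ne.symm hne)
  linarith

lemma step_unique {a b c : V} (h1 : T.step a b) (h2 : T.step a c) : b = c := by
  unfold PhyloTree.step at h1 h2
  rw [h1] at h2
  exact Option.some.inj h2

/-- descendants of a common vertex are comparable -/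
lemma chain_comparable {a b c : V} (h1 : Relation.ReflTransGen T.step a b)
    (h2 : Relation.ReflTransGen T.step a c) :
    Relation.ReflTransGen T.step b c ∨ Relation.ReflTransGen T.step c b := by
  induction h1 using Relation.ReflTransGen.head_induction_on generalizing c with
  | refl => exact Or.inl h2
  | head hstep hchain ih =>
    rename_i x y
    rcases Relation.ReflTransGen.cases_head h2 with heq | ⟨z, hz, hzc⟩
    · exact Or.inr (heq ▸ Relation.ReflTransGen.head hstep hchain)
    · have : y = z := step_unique T hstep hz
      subst this
      exact ih hzc

lemma leaf_anc_eq {v w : V} (hv : T.IsLeaf v) (h : T.anc v w) : v = w := by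
  rcases Relation.ReflTransGen.cases_tail h with heq | ⟨c, _, hcv⟩
  · exact heq
  · exact absurd hcv (hv c)

lemma anc_root_eq {v : V} (h : T.anc v T.root) : v = T.root := by
  rcases Relation.ReflTransGen.cases_head h with heq | ⟨c, hc, _⟩
  · exact heq.symm
  · exfalso; unfold PhyloTree.step at hc; rw [T.parent_root] at hc; cases hc

/-- the set of non-root ancestors of `u`, as a finset -/
def ancFinset (u : V) : Finset V := Finset.univ.filter (fun v => v ≠ T.root ∧ T.anc v u)

lemma sum_ancFinset (u : V) : (∑ v ∈ ancFinset T u, T.len v) = T.hgt u := by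
  induction (T.reaches_root u) using Relation.ReflTransGen.head_induction_on with
  | refl =>
    have : ancFinset T T.root = ∅ := by
      apply Finset.filter_false_of_mem
      intro v _
      rintro ⟨hne, hanc⟩
      exact hne (anc_root_eq T hanc)
    rw [this, Finset.sum_empty, T.hgt_root]
  | head hstep _ ih =>
    rename_i a w _
    have hane : a ≠ T.root := step_ne_root T hstep
    have hkey : ancFinset T a = insert a (ancFinset T w) := by
      ext v
      simp only [ancFinset, Finset.mem_insert, Finset.mem_filter, Finset.mem_univ, true_and]
      constructor
      · rintro ⟨hvne, hanc⟩
        rcases Relation.ReflTransGen.cases_head hanc with heq | ⟨z, hz, hzc⟩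
        · exact Or.inl heq.symm
        · have : w = z := step_unique T hstep hz
          subst this
          exact Or.inr ⟨hvne, hzc⟩
      · rintro (rfl | ⟨hvne, hanc⟩)
        · exact ⟨hane, Relation.ReflTransGen.refl⟩
        · exact ⟨hvne, Relation.ReflTransGen.head hstep hanc⟩
    have hnotmem : a ∉ ancFinset T w := by
      simp only [ancFinset, Finset.mem_filter, Finset.mem_univ, true_and]
      rintro ⟨_, hanc⟩
      have h1 := anc_hgt_le T hanc
      have h2 := hgt_lt_of_step T hstep
      linarith
    rw [hkey, Finset.sum_insert hnotmem, ih, T.hgt_eq a w hstep]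
    ring

lemma PD_eq_sum (Y : Set V) : T.PD Y =
    ∑ v ∈ Finset.univ.filter (fun v => v ≠ T.root ∧ ∃ x ∈ Y, T.IsLeaf x ∧ T.anc v x), T.len v := by
  rw [PhyloTree.PD, Finset.sum_filter]

end CatAux

namespace CatAux
variable {V : Type} [Fintype V] [DecidableEq V] (T : PhyloTree V)

lemma nonleaf_has_child {v : V} (hv : ¬ T.IsLeaf v) : ∃ u, T.step u v := by
  unfold PhyloTree.IsLeaf at hv
  push_neg at hv
  obtain ⟨u, hu⟩ := hv
  exact ⟨u, hu⟩

lemma step_parent_nonleaf {y u : V} (h : T.step y u) : ¬ T.IsLeaf u := by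
  intro hl
  exact hl y h

lemma exists_cherry_below (hB : T.Binary) {v : V} (hv : ¬ T.IsLeaf v) :
    ∃ x y w, x ≠ y ∧ T.IsLeaf x ∧ T.IsLeaf y ∧ T.step x w ∧ T.step y w ∧ T.anc v w := by
  classical
  set D := Finset.univ.filter (fun w => ¬ T.IsLeaf w ∧ T.anc v w) with hD
  have hne : D.Nonempty := by
    refine ⟨v, ?_⟩
    simp only [hD, Finset.mem_filter, Finset.mem_univ, true_and]
    exact ⟨hv, Relation.ReflTransGen.refl⟩
  obtain ⟨m, hmD, hmax⟩ := Finset.exists_max_image D T.hgt hne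
  simp only [hD, Finset.mem_filter, Finset.mem_univ, true_and] at hmD
  obtain ⟨hmnl, hmanc⟩ := hmD
  have h2 := hB m hmnl
  obtain ⟨x, y, hxy, hset⟩ := Set.ncard_eq_two.mp h2
  have hx : T.step x m := by
    have : x ∈ {u | T.parent u = some m} := by rw [hset]; exact Set.mem_insert x {y}
    exact this
  have hy : T.step y m := by
    have : y ∈ {u | T.parent u = some m} := by rw [hset]; right; rfl
    exact this
  have hleaf : ∀ z, T.step z m → T.IsLeaf z := by
    intro z hz
    by_contra hznl
    have hzD : z ∈ D := by
      simp only [hD, Finset.mem_filter, Finset.mem_univ, true_and]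
      exact ⟨hznl, Relation.ReflTransGen.head hz hmanc⟩
    have h3 := hmax z hzD
    have h4 := hgt_lt_of_step T hz
    linarith
  exact ⟨x, y, m, hxy, hleaf x hx, hleaf y hy, hx, hy, hmanc⟩

lemma children_eq_pair (hB : T.Binary) {x y m : V} (hxy : x ≠ y)
    (hx : T.step x m) (hy : T.step y m) :
    {u | T.step u m} = {x, y} := by
  have hnl : ¬ T.IsLeaf m := step_parent_nonleaf T hx
  have h2 : ({u | T.step u m}).ncard = 2 := hB m hnl
  have hsub : ({x, y} : Set V) ⊆ {u | T.step u m} := by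
    rintro z (rfl | rfl)
    · exact hx
    · exact hy
  exact (Set.eq_of_subset_of_ncard_le hsub
    (by rw [h2, Set.ncard_pair hxy]) (Set.toFinite _)).symm

lemma PD_formula (hroot : ¬ T.IsLeaf T.root) (Yf : Finset V) (hYl : ∀ y ∈ Yf, T.IsLeaf y)
    (y₀ : V) (hy₀ : y₀ ∈ Yf) (u₀ : V) (hstep₀ : T.step y₀ u₀)
    (hcomp : ∀ y ∈ Yf, ∀ u, T.step y u → T.anc u u₀) :
    T.PD ↑Yf = (∑ y ∈ Yf, T.len y) + T.hgt u₀ := by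
  classical
  have hkey : ∀ v : V, (v ≠ T.root ∧ ∃ x ∈ (↑Yf : Set V), T.IsLeaf x ∧ T.anc v x)
      ↔ v ∈ Yf ∪ ancFinset T u₀ := by
    intro v
    simp only [Finset.mem_union, ancFinset, Finset.mem_filter, Finset.mem_univ, true_and,
      Set.mem_setOf_eq, Finset.mem_coe]
    constructor
    · rintro ⟨hvne, x, hx, _, hanc⟩
      rcases Relation.ReflTransGen.cases_head hanc with heq | ⟨z, hz, hzc⟩
      · exact Or.inl (heq ▸ hx)
      · have hzu : T.anc z u₀ := hcomp x hx z hz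
        exact Or.inr ⟨hvne, Relation.ReflTransGen.trans hzu hzc⟩
    · rintro (hv | ⟨hvne, hanc⟩)
      · refine ⟨?_, v, hv, hYl v hv, Relation.ReflTransGen.refl⟩
        intro rfl'
        exact hroot (rfl' ▸ hYl v hv)
      · exact ⟨hvne, y₀, hy₀, hYl y₀ hy₀,
          Relation.ReflTransGen.head hstep₀ hanc⟩
  have hdisj : Disjoint Yf (ancFinset T u₀) := by
    rw [Finset.disjoint_left]
    intro v hv hv'
    simp only [ancFinset, Finset.mem_filter, Finset.mem_univ, true_and] at hv'
    have := leaf_anc_eq T (hYl v hv) hv'.2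
    exact step_parent_nonleaf T hstep₀ (this ▸ hYl v hv)
  have h1 : T.PD ↑Yf = ∑ v ∈ Yf ∪ ancFinset T u₀, T.len v := by
    unfold PhyloTree.PD
    simp only [hkey]
    rw [Finset.sum_ite_mem, Finset.univ_inter]
  rw [h1, Finset.sum_union hdisj, sum_ancFinset]

end CatAux

open CatAux

/-- concluding remarks of the paper.  For an ultrametric
rooted caterpillar tree on `n` leaves:  for every `2 ≤ k ≤ n` there is exactly
one size-`k` minPD set, namely the set of `k` leaves whose pendant edges are
shortest; and for `k = 1` there are exactly `n` size-1 minPD sets (every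
singleton of a leaf is a minPD set). -/
theorem caterpillar_minPD_sets
    {V : Type} [Fintype V] [DecidableEq V] (T : PhyloTree V)
    (hU : T.Ultrametric) (hCat : T.IsCaterpillar) (n : ℕ)
    (hn : n = T.leaves.ncard) :
    (∀ k, 2 ≤ k → k ≤ n →
      (∃! A : Set V, T.IsMinPD k A) ∧
      ∀ A, T.IsMinPD k A → ∀ x ∈ A, ∀ y ∈ T.leaves, y ∉ A → T.len x ≤ T.len y) ∧
    ({A : Set V | T.IsMinPD 1 A}.ncard = n ∧ ∀ x ∈ T.leaves, T.IsMinPD 1 {x}) := by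
  classical
  obtain ⟨hB, p₀, hp₀, huniq⟩ := hCat
  obtain ⟨c₁, c₂, m₀, hc12, hp₀eq, hlc₁, hlc₂, hpc₁, hpc₂⟩ := hp₀
  subst hp₀eq
  -- basic facts
  have hroot : ¬ T.IsLeaf T.root := by
    have hc₁r : c₁ ≠ T.root := step_ne_root T hpc₁
    rcases Relation.ReflTransGen.cases_tail (T.reaches_root c₁) with heq | ⟨c, _, hc⟩
    · exact absurd heq.symm hc₁r
    · exact fun hl => hl c hc
  have hanc_m : ∀ u, ¬ T.IsLeaf u → T.anc u m₀ := by
    intro u hu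
    obtain ⟨x, y, w, hxy, hlx, hly, hsx, hsy, hanc⟩ := exists_cherry_below T hB hu
    have hpair : ({x, y} : Set V) = {c₁, c₂} :=
      huniq {x, y} ⟨x, y, w, hxy, rfl, hlx, hly, hsx, hsy⟩
    have hxmem : x ∈ ({c₁, c₂} : Set V) := hpair ▸ Set.mem_insert x {y}
    have hwm : w = m₀ := by
      rcases hxmem with rfl | hx2
      · exact step_unique T hsx hpc₁
      · have : x = c₂ := hx2
        subst this
        exact step_unique T hsx hpc₂
    exact hwm ▸ hanc
  have hpar : ∀ y, T.IsLeaf y → ∃ u, T.step y u := by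
    intro y hy
    have hyr : y ≠ T.root := fun h => hroot (h ▸ hy)
    have := T.parent_isSome y hyr
    exact ⟨(T.parent y).get this, (Option.some_get this).symm⟩
  set h₀ := T.hgt c₁ with hh₀
  have hgt_leaf : ∀ y, T.IsLeaf y → T.hgt y = h₀ := fun y hy => hU y c₁ hy hlc₁
  have len_eq : ∀ y u, T.IsLeaf y → T.step y u → T.len y = h₀ - T.hgt u := by
    intro y u hy hs
    have := T.hgt_eq y u hs
    have := hgt_leaf y hy
    linarith
  have hlen_c₁ : T.len c₁ = h₀ - T.hgt m₀ := len_eq c₁ m₀ hlc₁ hpc₁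
  have hlen_c₂ : T.len c₂ = T.len c₁ := by
    rw [hlen_c₁, len_eq c₂ m₀ hlc₂ hpc₂]
  have len_min : ∀ y, T.IsLeaf y → T.len c₁ ≤ T.len y := by
    intro y hy
    obtain ⟨u, hu⟩ := hpar y hy
    have hunl : ¬ T.IsLeaf u := step_parent_nonleaf T hu
    have h1 : T.hgt u ≤ T.hgt m₀ := anc_hgt_le T (hanc_m u hunl)
    rw [len_eq y u hy hu, hlen_c₁]
    linarith
  -- parents of leaves with equal pendant length coincide
  have parent_eq_of_len : ∀ y z u w, T.IsLeaf y → T.IsLeaf z → T.step y u → T.step z w →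
      T.len y = T.len z → u = w := by
    intro y z u w hy hz hu hw hlen
    have hunl : ¬ T.IsLeaf u := step_parent_nonleaf T hu
    have hwnl : ¬ T.IsLeaf w := step_parent_nonleaf T hw
    have hhgt : T.hgt u = T.hgt w := by
      have h1 := len_eq y u hy hu
      have h2 := len_eq z w hz hw
      linarith
    rcases chain_comparable T (hanc_m u hunl) (hanc_m w hwnl) with hc | hc
    · by_contra hne
      have := anc_hgt_lt T (show T.anc w u from hc) (Ne.symm hne)
      linarith
    · by_contra hne
      have := anc_hgt_lt T (show T.anc u w from hc) hne
      linarith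
  have hchildren : {u | T.step u m₀} = {c₁, c₂} :=
    children_eq_pair T hB hc12 hpc₁ hpc₂
  have mem_pair_of_len_min : ∀ y, T.IsLeaf y → T.len y = T.len c₁ → y = c₁ ∨ y = c₂ := by
    intro y hy hlen
    obtain ⟨u, hu⟩ := hpar y hy
    have hum : u = m₀ := parent_eq_of_len y c₁ u m₀ hy hlc₁ hu hpc₁ hlen
    have : y ∈ ({c₁, c₂} : Set V) := hchildren ▸ (show y ∈ {u | T.step u m₀} from hum ▸ hu)
    exact this
  have len_strict : ∀ y, T.IsLeaf y → y ≠ c₁ → y ≠ c₂ → T.len c₁ < T.len y := by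
    intro y hy h1 h2
    rcases lt_or_eq_of_le (len_min y hy) with h | h
    · exact h
    · rcases mem_pair_of_len_min y hy h.symm with rfl | rfl
      · exact absurd rfl h1
      · exact absurd rfl h2
  -- leaf finset
  set Lf : Finset V := Finset.univ.filter (fun v => T.IsLeaf v) with hLf
  have hLf_mem : ∀ v, v ∈ Lf ↔ T.IsLeaf v := by
    intro v; simp [hLf]
  have hLf_coe : (↑Lf : Set V) = T.leaves := by
    ext v; simp [hLf, PhyloTree.leaves]
  have hnLf : n = Lf.card := by
    rw [hn, ← hLf_coe, Set.ncard_coe_finset]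
  have hc₁L : c₁ ∈ Lf := (hLf_mem c₁).mpr hlc₁
  have hc₂L : c₂ ∈ Lf := (hLf_mem c₂).mpr hlc₂
  -- the candidate optimal sets
  set Af : ℕ → Finset V :=
    fun k => Lf.filter (fun y => (Lf.filter fun z => T.len z < T.len y).card < k) with hAf
  have hsep : ∀ k, ∀ b ∈ Af k, ∀ z ∈ Lf, z ∉ Af k → T.len b < T.len z := by
    intro k b hb z hz hzn
    simp only [hAf, Finset.mem_filter] at hb hzn
    have hzr : ¬ (Lf.filter fun w => T.len w < T.len z).card < k := fun h => hzn ⟨hz, h⟩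
    by_contra hle
    push_neg at hle
    have hsub : (Lf.filter fun w => T.len w < T.len z) ⊆ Lf.filter fun w => T.len w < T.len b := by
      intro w hw
      simp only [Finset.mem_filter] at hw ⊢
      exact ⟨hw.1, lt_of_lt_of_le hw.2 hle⟩
    exact hzr (lt_of_le_of_lt (Finset.card_le_card hsub) hb.2)
  have hc₂A : ∀ k, 1 ≤ k → c₂ ∈ Af k := by
    intro k hk
    simp only [hAf, Finset.mem_filter]
    refine ⟨hc₂L, ?_⟩
    have : (Lf.filter fun z => T.len z < T.len c₂) = ∅ := by
      apply Finset.filter_false_of_mem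
      intro z hz
      rw [hlen_c₂]
      exact not_lt.mpr (len_min z ((hLf_mem z).mp hz))
    rw [this]
    simp; omega
  have hAsubL : ∀ k, Af k ⊆ Lf := fun k => Finset.filter_subset _ _
  -- cardinality of Af k
  have hAcard : ∀ k, 2 ≤ k → k ≤ n → (Af k).card = k := by
    intro k hk2 hkn
    set L' := Lf.erase c₂ with hL'
    have hL'card : L'.card = n - 1 := by
      rw [hL', Finset.card_erase_of_mem hc₂L, hnLf]
    have hinj : Set.InjOn T.len ↑L' := by
      intro y hy z hz hlen
      by_contra hne
      have hyL : y ∈ Lf := Finset.mem_of_mem_erase (Finset.mem_coe.mp hy)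
      have hzL : z ∈ Lf := Finset.mem_of_mem_erase (Finset.mem_coe.mp hz)
      have hyl := (hLf_mem y).mp hyL
      have hzl := (hLf_mem z).mp hzL
      obtain ⟨u, hu⟩ := hpar y hyl
      obtain ⟨w, hw⟩ := hpar z hzl
      have huw : u = w := parent_eq_of_len y z u w hyl hzl hu hw hlen
      subst huw
      have hpair : ({y, z} : Set V) = {c₁, c₂} :=
        huniq {y, z} ⟨y, z, u, hne, rfl, hyl, hzl, hu, hw⟩
      have : c₂ ∈ ({y, z} : Set V) := hpair ▸ (by right; rfl)
      rcases this with h | h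
      · exact (Finset.mem_erase.mp (Finset.mem_coe.mp hy)).1 h.symm
      · exact (Finset.mem_erase.mp (Finset.mem_coe.mp hz)).1 h.symm
    have hkey : Af k = insert c₂
        (L'.filter fun y => (L'.filter fun z => T.len z < T.len y).card < k - 1) := by
      ext v
      simp only [hAf, Finset.mem_insert, Finset.mem_filter, hL', Finset.mem_erase]
      constructor
      · rintro ⟨hvL, hvr⟩
        by_cases hvc₂ : v = c₂
        · exact Or.inl hvc₂
        · refine Or.inr ⟨⟨hvc₂, hvL⟩, ?_⟩
          by_cases hvc₁ : v = c₁
          · have : (Lf.erase c₂).filter (fun z => T.len z < T.len v) = ∅ := by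
              apply Finset.filter_false_of_mem
              intro z hz
              rw [hvc₁]
              exact not_lt.mpr (len_min z ((hLf_mem z).mp (Finset.mem_of_mem_erase hz)))
            rw [this]
            simp; omega
          · have hvlen : T.len c₁ < T.len v := len_strict v ((hLf_mem v).mp hvL) hvc₁ hvc₂
            have hfilt : Lf.filter (fun z => T.len z < T.len v)
                = insert c₂ ((Lf.erase c₂).filter fun z => T.len z < T.len v) := by
              ext w
              simp only [Finset.mem_insert, Finset.mem_filter, Finset.mem_erase]
              constructor
              · rintro ⟨hwL, hwv⟩
                by_cases hwc : w = c₂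
                · exact Or.inl hwc
                · exact Or.inr ⟨⟨hwc, hwL⟩, hwv⟩
              · rintro (rfl | ⟨⟨_, hwL⟩, hwv⟩)
                · exact ⟨hc₂L, by rw [hlen_c₂]; exact hvlen⟩
                · exact ⟨hwL, hwv⟩
            rw [hfilt, Finset.card_insert_of_notMem (by simp)] at hvr
            omega
      · rintro (hvc | ⟨⟨hvc₂, hvL⟩, hvr⟩)
        · rw [hvc]
          refine ⟨hc₂L, ?_⟩
          have : (Lf.filter fun z => T.len z < T.len c₂) = ∅ := by
            apply Finset.filter_false_of_mem
            intro z hz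
            rw [hlen_c₂]
            exact not_lt.mpr (len_min z ((hLf_mem z).mp hz))
          rw [this]
          simp; omega
        · refine ⟨hvL, ?_⟩
          by_cases hvc₁ : v = c₁
          · have : (Lf.filter fun z => T.len z < T.len v) = ∅ := by
              apply Finset.filter_false_of_mem
              intro z hz
              rw [hvc₁]
              exact not_lt.mpr (len_min z ((hLf_mem z).mp hz))
            rw [this]
            simp; omega
          · have hvlen : T.len c₁ < T.len v := len_strict v ((hLf_mem v).mp hvL) hvc₁ hvc₂
            have hfilt : Lf.filter (fun z => T.len z < T.len v)
                = insert c₂ ((Lf.erase c₂).filter fun z => T.len z < T.len v) := by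
              ext w
              simp only [Finset.mem_insert, Finset.mem_filter, Finset.mem_erase]
              constructor
              · rintro ⟨hwL, hwv⟩
                by_cases hwc : w = c₂
                · exact Or.inl hwc
                · exact Or.inr ⟨⟨hwc, hwL⟩, hwv⟩
              · rintro (rfl | ⟨⟨_, hwL⟩, hwv⟩)
                · exact ⟨hc₂L, by rw [hlen_c₂]; exact hvlen⟩
                · exact ⟨hwL, hwv⟩
            rw [hfilt, Finset.card_insert_of_notMem (by simp)]
            omega
    rw [hkey, Finset.card_insert_of_notMem (by simp [hL']),
      rank_card_inj L' T.len hinj (k - 1) (by rw [hL'card]; omega)]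
    omega
  -- PD formula for sets of leaves
  have hPD : ∀ (Yf : Finset V), Yf ⊆ Lf → ∀ y₀ ∈ Yf, (∀ y ∈ Yf, T.len y₀ ≤ T.len y) →
      T.PD ↑Yf = (∑ y ∈ Yf, T.len y) + h₀ - T.len y₀ := by
    intro Yf hsub y₀ hy₀ hmin
    have hy₀l : T.IsLeaf y₀ := (hLf_mem y₀).mp (hsub hy₀)
    obtain ⟨u₀, hu₀⟩ := hpar y₀ hy₀l
    have hcomp : ∀ y ∈ Yf, ∀ u, T.step y u → T.anc u u₀ := by
      intro y hy u hu
      have hyl : T.IsLeaf y := (hLf_mem y).mp (hsub hy)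
      have hunl : ¬ T.IsLeaf u := step_parent_nonleaf T hu
      have hu₀nl : ¬ T.IsLeaf u₀ := step_parent_nonleaf T hu₀
      have hhgt : T.hgt u ≤ T.hgt u₀ := by
        have h1 := len_eq y u hyl hu
        have h2 := len_eq y₀ u₀ hy₀l hu₀
        have h3 := hmin y hy
        linarith
      rcases chain_comparable T (hanc_m u₀ hu₀nl) (hanc_m u hunl) with hc | hc
      · exact hc
      · by_cases hne : u = u₀
        · exact hne ▸ Relation.ReflTransGen.refl
        · have hlt := anc_hgt_lt T (show T.anc u₀ u from hc) (fun h => hne h.symm)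
          exact absurd hhgt (not_le.mpr hlt)
    rw [PD_formula T hroot Yf (fun y hy => (hLf_mem y).mp (hsub hy)) y₀ hy₀ u₀ hu₀ hcomp,
      len_eq y₀ u₀ hy₀l hu₀]
    ring
  -- main comparison for k ≥ 2
  have hmain : ∀ k, 2 ≤ k → ∀ (Yf : Finset V), Yf ⊆ Lf → Yf.card = k →
      T.PD ↑(Af k) ≤ T.PD ↑Yf ∧ (T.PD ↑(Af k) = T.PD ↑Yf → Yf = Af k) := by
    intro k hk2 Yf hYsub hYcard
    have hYne : Yf.Nonempty := Finset.card_pos.mp (by omega)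
    obtain ⟨yY, hyYmem, hyYmin, hyYc₂, hycase⟩ :
        ∃ yY ∈ Yf, (∀ y ∈ Yf, T.len yY ≤ T.len y) ∧ c₂ ∉ Yf.erase yY ∧ (yY = c₂ ∨ c₂ ∉ Yf) := by
      by_cases hc2Y : c₂ ∈ Yf
      · refine ⟨c₂, hc2Y, ?_, by simp, Or.inl rfl⟩
        intro y hy
        rw [hlen_c₂]
        exact len_min y ((hLf_mem y).mp (hYsub hy))
      · obtain ⟨mm, hm, hmm⟩ := Finset.exists_min_image Yf T.len hYne
        exact ⟨mm, hm, hmm, fun h => hc2Y (Finset.mem_of_mem_erase h), Or.inr hc2Y⟩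
    have hkn : k ≤ n := by
      rw [hnLf]
      exact hYcard ▸ Finset.card_le_card hYsub
    have hc₂Af : c₂ ∈ Af k := hc₂A k (by omega)
    have hPDY : T.PD ↑Yf = (∑ y ∈ Yf, T.len y) + h₀ - T.len yY := hPD Yf hYsub yY hyYmem hyYmin
    have hPDA : T.PD ↑(Af k) = (∑ y ∈ Af k, T.len y) + h₀ - T.len c₂ := by
      apply hPD (Af k) (hAsubL k) c₂ hc₂Af
      intro y hy
      rw [hlen_c₂]
      exact len_min y ((hLf_mem y).mp (hAsubL k hy))
    set B := (Af k).erase c₂ with hBdef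
    set S := Yf.erase yY with hSdef
    have hAk : (Af k).card = k := hAcard k hk2 hkn
    have hBcard : B.card = k - 1 := by rw [hBdef, Finset.card_erase_of_mem hc₂Af, hAk]
    have hScard : S.card = k - 1 := by rw [hSdef, Finset.card_erase_of_mem hyYmem, hYcard]
    have hsep' : ∀ b ∈ B, ∀ z ∈ S, z ∉ B → T.len b < T.len z := by
      intro b hb z hz hzB
      have hbA : b ∈ Af k := Finset.mem_of_mem_erase hb
      have hzY : z ∈ Yf := Finset.mem_of_mem_erase hz
      have hzc₂ : z ≠ c₂ := fun h => hyYc₂ (h ▸ hz)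
      have hzA : z ∉ Af k := fun h => hzB (Finset.mem_erase.mpr ⟨hzc₂, h⟩)
      exact hsep k b hbA z (hYsub hzY) hzA
    obtain ⟨hle, heqc⟩ := sum_le_of_sep T.len B S (by omega) hsep'
    have hsB : (∑ b ∈ B, T.len b) + T.len c₂ = ∑ y ∈ Af k, T.len y :=
      Finset.sum_erase_add (Af k) T.len hc₂Af
    have hsS : (∑ z ∈ S, T.len z) + T.len yY = ∑ y ∈ Yf, T.len y :=
      Finset.sum_erase_add Yf T.len hyYmem
    constructor
    · rw [hPDA, hPDY]
      linarith
    · intro hPDeq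
      have hBS : B = S := heqc (by rw [hPDA, hPDY] at hPDeq; linarith)
      rcases hycase with hyc | hc2Y
      · have h1 : Yf = insert yY S := (Finset.insert_erase hyYmem).symm
        rw [h1, hyc, hBS.symm, hBdef, Finset.insert_erase hc₂Af]
      · exfalso
        have hyYA : yY ∉ Af k := by
          intro h
          have hyYne : yY ≠ c₂ := fun hh => hc2Y (hh ▸ hyYmem)
          have hmem : yY ∈ B := Finset.mem_erase.mpr ⟨hyYne, h⟩
          rw [hBS] at hmem
          exact (Finset.mem_erase.mp hmem).1 rfl
        have hBne : B.Nonempty := by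
          rw [← Finset.card_pos, hBcard]; omega
        obtain ⟨b, hb⟩ := hBne
        have h1 : T.len b < T.len yY :=
          hsep k b (Finset.mem_of_mem_erase hb) yY (hYsub hyYmem) hyYA
        have h2 : T.len yY ≤ T.len b := hyYmin b (Finset.mem_of_mem_erase (hBS ▸ hb))
        linarith
  -- set version
  have hfin : ∀ Y : Set V, Y ⊆ T.leaves → ∀ k, Y.ncard = k → 2 ≤ k →
      T.PD ↑(Af k) ≤ T.PD Y ∧ (T.PD ↑(Af k) = T.PD Y → Y = ↑(Af k)) := by
    intro Y hYsub k hYcard hk2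
    have hYfin : Y.Finite := Set.toFinite Y
    set Yf := hYfin.toFinset with hYfdef
    have hcoe : (↑Yf : Set V) = Y := hYfin.coe_toFinset
    have hsub : Yf ⊆ Lf := by
      intro y hy
      rw [hLf_mem]
      have : y ∈ Y := by rw [← hcoe]; exact hy
      exact hYsub this
    have hcard : Yf.card = k := by rw [← Set.ncard_coe_finset, hcoe]; exact hYcard
    obtain ⟨h1, h2⟩ := hmain k hk2 Yf hsub hcard
    rw [hcoe] at h1 h2
    exact ⟨h1, fun h => by rw [← hcoe, h2 h]⟩
  have hAmin : ∀ k, 2 ≤ k → k ≤ n → T.IsMinPD k ↑(Af k) := by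
    intro k hk2 hkn
    refine ⟨?_, ?_, ?_⟩
    · rw [← hLf_coe]
      exact_mod_cast hAsubL k
    · rw [Set.ncard_coe_finset]
      exact hAcard k hk2 hkn
    · intro Y hYsub hYcard
      exact (hfin Y hYsub k hYcard hk2).1
  have hAuniq : ∀ k, 2 ≤ k → k ≤ n → ∀ A, T.IsMinPD k A → A = ↑(Af k) := by
    intro k hk2 hkn A hA
    obtain ⟨hAsub, hAcard', hAopt⟩ := hA
    have h1 := (hfin A hAsub k hAcard' hk2).1
    have h2 := hAopt ↑(Af k) ((hAmin k hk2 hkn).1) ((hAmin k hk2 hkn).2.1)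
    exact (hfin A hAsub k hAcard' hk2).2 (le_antisymm h1 h2)
  -- the k = 1 case
  have hPD1 : ∀ x, T.IsLeaf x → T.PD {x} = h₀ := by
    intro x hx
    have hxL : x ∈ Lf := (hLf_mem x).mpr hx
    have hform := hPD {x} (by simpa using hxL) x (Finset.mem_singleton_self x)
      (fun y hy => le_of_eq (by rw [Finset.mem_singleton.mp hy]))
    rw [Finset.coe_singleton] at hform
    rw [hform, Finset.sum_singleton]
    ring
  have hMin1 : ∀ x ∈ T.leaves, T.IsMinPD 1 {x} := by
    intro x hx
    refine ⟨Set.singleton_subset_iff.mpr hx, Set.ncard_singleton x, ?_⟩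
    intro Y hYsub hYcard
    obtain ⟨y, rfl⟩ := Set.ncard_eq_one.mp hYcard
    rw [hPD1 x hx, hPD1 y (hYsub (Set.mem_singleton y))]
  have hset1 : {A : Set V | T.IsMinPD 1 A} = (fun x => ({x} : Set V)) '' T.leaves := by
    ext A
    simp only [Set.mem_setOf_eq, Set.mem_image]
    constructor
    · rintro ⟨hAsub, hAcard', _⟩
      obtain ⟨x, rfl⟩ := Set.ncard_eq_one.mp hAcard'
      exact ⟨x, hAsub (Set.mem_singleton x), rfl⟩
    · rintro ⟨x, hx, rfl⟩
      exact hMin1 x hx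
  refine ⟨?_, ?_, hMin1⟩
  · intro k hk2 hkn
    refine ⟨⟨↑(Af k), hAmin k hk2 hkn, fun A hA => hAuniq k hk2 hkn A hA⟩, ?_⟩
    intro A hA x hxA y hyl hyA
    have hAeq := hAuniq k hk2 hkn A hA
    rw [hAeq] at hxA hyA
    have hxAf : x ∈ Af k := by exact_mod_cast hxA
    have hyL : y ∈ Lf := (hLf_mem y).mpr hyl
    have hyAf : y ∉ Af k := fun h => hyA (by exact_mod_cast h)
    exact le_of_lt (hsep k x hxAf y hyL hyAf)
  · rw [hset1, Set.ncard_image_of_injective _ Set.singleton_injective]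
    exact hn.symm
end
end
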